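/- arXiv:2602.10290 — 8 statements merged into one kernel-verified Lean document; each statement's English description precedes it below -/
import Mathlib

section
/- In the BR-reduction election for a 3-CNF formula Φ with p variables and q clauses, there exists an assignment σ : Fin p → Bool whose general-election winner is x⊤ if and only if Φ is satisfiable. (Correctness of the NP-hardness reduction for the Best-Response-at-Least-U problem: the distinguished voter has a primary strategy achieving the threshold utility exactly when Φ is satisfiable.) -/
/-! Common framework: 3-CNF formulas and the BR-reduction election. -/

/-- A literal over `p` variables: a variable index together with a polarity. -/
abbrev Lit (p : ℕ) := Fin p × Bool

/-- A 3-clause: a triple of literals. -/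
abbrev Clause3 (p : ℕ) := Lit p × Lit p × Lit p

/-- A 3-CNF formula: a finite list of 3-clauses. -/
abbrev CNF3 (p : ℕ) := List (Clause3 p)

/-- A literal `(k, ε)` is true under assignment `σ` iff `σ k = ε`. -/
def litTrue {p : ℕ} (σ : Fin p → Bool) (l : Lit p) : Bool := σ l.1 == l.2

/-- An assignment satisfies a clause iff some literal of the clause is true. -/
def satClause {p : ℕ} (σ : Fin p → Bool) (c : Clause3 p) : Bool :=
  litTrue σ c.1 || litTrue σ c.2.1 || litTrue σ c.2.2

/-- An assignment satisfies a 3-CNF formula iff it satisfies every clause. -/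
def Satisfies {p : ℕ} (σ : Fin p → Bool) (Φ : CNF3 p) : Prop :=
  ∀ c ∈ Φ, satClause σ c = true

/-- Candidates of the BR-reduction election: the `2p` literals plus the
two anchor candidates `x⊤ = Sum.inr true` and `x⊥ = Sum.inr false`. -/
abbrev Cand (p : ℕ) := Lit p ⊕ Bool

/-- The anchor candidate `x⊤`. -/
def xTop (p : ℕ) : Cand p := Sum.inr true

/-- The anchor candidate `x⊥`. -/
def xBot (p : ℕ) : Cand p := Sum.inr false

instance {p : ℕ} : Nonempty (Cand p) := ⟨Sum.inr true⟩

/-- The first literal of a clause (in listed order) that is true under `σ`. -/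
def firstTrueLit {p : ℕ} (σ : Fin p → Bool) (c : Clause3 p) : Option (Lit p) :=
  if litTrue σ c.1 then some c.1
  else if litTrue σ c.2.1 then some c.2.1
  else if litTrue σ c.2.2 then some c.2.2
  else none

/-- The general-election tally of the BR-reduction election for `Φ` under the
assignment `σ`: `x⊤` gets `q + 2` votes, `x⊥` gets `q + 1` plus one vote per
falsified clause, and each satisfied clause contributes one vote to its first
true literal. -/
def tally {p : ℕ} (Φ : CNF3 p) (σ : Fin p → Bool) : Cand p → ℕ
  | Sum.inr true => Φ.length + 2
  | Sum.inr false => (Φ.length + 1) + (Φ.filter (fun c => !(satClause σ c))).length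
  | Sum.inl l => (Φ.filter (fun c => decide (firstTrueLit σ c = some l))).length

open Classical in
/-- The FPTP winner with respect to the tie-breaking linear order `r`:
the `r`-least candidate among the candidates maximizing the tally `t`. -/
noncomputable def fptpWinner {A : Type*} [Fintype A] [Nonempty A]
    (r : LinearOrder A) (t : A → ℕ) : A :=
  @Finset.min' A r (Finset.univ.filter fun a => ∀ b, t b ≤ t a) (by
    obtain ⟨a, -, ha⟩ := Finset.exists_max_image (Finset.univ : Finset A) t
      ⟨Classical.arbitrary A, Finset.mem_univ _⟩
    exact ⟨a, Finset.mem_filter.mpr ⟨Finset.mem_univ _, fun b => ha b (Finset.mem_univ _)⟩⟩)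

/-- The general-election winner of the BR-reduction election under assignment `σ`,
with tie-breaking order `r`. -/
noncomputable def geWinner {p : ℕ} (Φ : CNF3 p) (r : LinearOrder (Cand p))
    (σ : Fin p → Bool) : Cand p :=
  fptpWinner r (tally Φ σ)

/-- in the BR-reduction election for `Φ`, there exists an assignment
whose general-election winner is `x⊤` iff `Φ` is satisfiable (for any tie-breaking
order in which `x⊥` precedes `x⊤`). -/
theorem stmt0 {p : ℕ} (Φ : CNF3 p) (r : LinearOrder (Cand p))
    (hr : r.lt (xBot p) (xTop p)) :
    (∃ σ : Fin p → Bool, geWinner Φ r σ = xTop p) ↔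
      (∃ σ : Fin p → Bool, Satisfies σ Φ) := by
  classical
  have hlit : ∀ (σ : Fin p → Bool) (l : Lit p),
      tally Φ σ (Sum.inl l) ≤ Φ.length := fun σ l => List.length_filter_le _ _
  constructor
  · rintro ⟨σ, hσ⟩
    refine ⟨σ, fun c hc => ?_⟩
    by_contra hcf
    set S := (Finset.univ.filter fun a => ∀ b, tally Φ σ b ≤ tally Φ σ a) with hS
    have hne : S.Nonempty := by
      obtain ⟨a, -, ha⟩ := Finset.exists_max_image (Finset.univ : Finset (Cand p))
        (tally Φ σ) ⟨Classical.arbitrary _, Finset.mem_univ _⟩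
      exact ⟨a, Finset.mem_filter.mpr ⟨Finset.mem_univ _, fun b => ha b (Finset.mem_univ _)⟩⟩
    have hwin : @Finset.min' _ r S hne = xTop p := hσ
    have hmem : xTop p ∈ S := hwin ▸ @Finset.min'_mem _ r S hne
    have hmax : ∀ b, tally Φ σ b ≤ tally Φ σ (xTop p) :=
      (Finset.mem_filter.mp hmem).2
    -- falsified count ≥ 1
    have hcmem : c ∈ Φ.filter (fun c => !(satClause σ c)) := by
      rw [List.mem_filter]
      exact ⟨hc, by simp [hcf]⟩
    have h1 : 1 ≤ (Φ.filter (fun c => !(satClause σ c))).length :=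
      List.length_pos_of_mem hcmem
    have hbot : tally Φ σ (xBot p) = Φ.length + 2 := by
      have hle := hmax (xBot p)
      simp only [tally, xBot, xTop] at hle ⊢
      omega
    have hbotmem : xBot p ∈ S := by
      refine Finset.mem_filter.mpr ⟨Finset.mem_univ _, fun b => ?_⟩
      rw [hbot]; exact hmax b
    have := @Finset.min'_le _ r S (xBot p) hbotmem
    rw [hwin] at this
    exact absurd this (@not_le_of_gt _ r.toPreorder _ _ hr)
  · rintro ⟨σ, hσ⟩
    refine ⟨σ, ?_⟩
    have hfalse : (Φ.filter (fun c => !(satClause σ c))).length = 0 := by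
      rw [List.length_eq_zero_iff, List.filter_eq_nil_iff]
      intro c hc
      simp [hσ c hc]
    have hmax : ∀ b, tally Φ σ b ≤ tally Φ σ (xTop p) := by
      intro b
      rcases b with l | b
      · exact le_trans (hlit σ l) (by simp [tally, xTop])
      · cases b
        · simp [tally, xTop, hfalse]
        · exact le_refl _
    have hSeq : (Finset.univ.filter fun a => ∀ b, tally Φ σ b ≤ tally Φ σ a)
        = {xTop p} := by
      ext a
      simp only [Finset.mem_filter, Finset.mem_univ, true_and, Finset.mem_singleton]
      constructor
      · intro ha
        have h2 := ha (xTop p)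
        rcases a with l | b
        · have := hlit σ l
          simp only [tally, xTop] at h2 this
          omega
        · cases b
          · simp only [tally, xTop, hfalse] at h2
            omega
          · rfl
      · rintro rfl; exact hmax
    show fptpWinner r (tally Φ σ) = xTop p
    unfold fptpWinner
    have : ∀ (h : ((Finset.univ.filter fun a => ∀ b, tally Φ σ b ≤ tally Φ σ a)).Nonempty),
        @Finset.min' _ r _ h = xTop p := by
      intro h
      have := @Finset.min'_singleton _ r (xTop p)
      rw [← this]
      congr 1
    exact this _
end

section
/- In the BR-reduction election for a 3-CNF formula Φ with p variables and q clauses, for every assignment σ : Fin p → Bool the general-election winner under σ equals x⊤ if σ satisfies Φ, and equals x⊥ otherwise. -/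
/-- in the BR-reduction election for `Φ`, for every assignment `σ`
the general-election winner is `x⊤` if `σ` satisfies `Φ`, and `x⊥` otherwise. -/
theorem stmt1 {p : ℕ} (Φ : CNF3 p) (r : LinearOrder (Cand p))
    (hr : r.lt (xBot p) (xTop p)) (σ : Fin p → Bool) :
    (Satisfies σ Φ → geWinner Φ r σ = xTop p) ∧
    (¬ Satisfies σ Φ → geWinner Φ r σ = xBot p) := by
  classical
  have hlit : ∀ l : Lit p, tally Φ σ (Sum.inl l) ≤ Φ.length := by
    intro l
    exact List.length_filter_le _ _
  constructor
  · intro hsat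
    have hfilt : (Φ.filter (fun c => !(satClause σ c))) = [] := by
      rw [List.filter_eq_nil_iff]
      intro c hc
      simp [hsat c hc]
    have hset : (Finset.univ.filter fun a => ∀ b, tally Φ σ b ≤ tally Φ σ a)
        = {xTop p} := by
      ext a
      simp only [Finset.mem_filter, Finset.mem_univ, true_and, Finset.mem_singleton]
      constructor
      · intro ha
        have h1 := ha (xTop p)
        rcases a with l | b
        · have := hlit l
          simp only [tally] at this h1
          simp [xTop] at h1
          omega
        · cases b
          · simp [tally, xTop, hfilt] at h1
          · rfl
      · rintro rfl
        intro b
        rcases b with l | b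
        · have := hlit l
          simp only [tally] at this ⊢
          simp [xTop]
          omega
        · cases b <;> simp [tally, xTop, hfilt]
    have key : ∀ (S : Finset (Cand p)) (hS : S.Nonempty), S = {xTop p} →
        @Finset.min' _ r S hS = xTop p := by
      rintro S hS rfl
      exact @Finset.min'_singleton _ r _
    refine key _ ?_ hset
    rw [hset]
    exact Finset.singleton_nonempty _
  · intro hunsat
    have : ∃ c ∈ Φ, satClause σ c = false := by
      by_contra h
      push_neg at h
      exact hunsat fun c hc => by
        have := h c hc
        simpa using this
    obtain ⟨c, hc, hcf⟩ := this
    have hf : 1 ≤ (Φ.filter (fun c => !(satClause σ c))).length := by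
      have : c ∈ Φ.filter (fun c => !(satClause σ c)) := by
        rw [List.mem_filter]
        exact ⟨hc, by simp [hcf]⟩
      exact List.length_pos_iff.mpr (List.ne_nil_of_mem this)
    have hbotmem : xBot p ∈
        (Finset.univ.filter fun a => ∀ b, tally Φ σ b ≤ tally Φ σ a) := by
      rw [Finset.mem_filter]
      refine ⟨Finset.mem_univ _, fun b => ?_⟩
      rcases b with l | b
      · have := hlit l
        simp only [tally] at this ⊢
        simp [xBot]
        omega
      · cases b <;> simp [tally, xBot] <;> omega
    have hsub : ∀ a ∈ (Finset.univ.filter fun a => ∀ b, tally Φ σ b ≤ tally Φ σ a),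
        r.le (xBot p) a := by
      intro a ha
      rw [Finset.mem_filter] at ha
      have h1 := ha.2 (xBot p)
      rcases a with l | b
      · exfalso
        have := hlit l
        simp only [tally] at this h1
        simp [xBot] at h1
        omega
      · cases b
        · exact r.le_refl _
        · exact @le_of_lt _ (@PartialOrder.toPreorder _ r.toPartialOrder) _ _ hr
    have h1 := @Finset.min'_le _ r _ _ hbotmem
    have h2 := @Finset.le_min' _ r _ ⟨_, hbotmem⟩ _ hsub
    exact @le_antisymm _ r.toPartialOrder _ _ h1 h2
end

section
/- In the BR-reduction election for a 3-CNF formula Φ with p variables and q clauses, for every assignment σ : Fin p → Bool, every candidate other than the anchors x⊤ and x⊥ receives at most q votes in the tally t_σ, which is strictly fewer than the q + 2 votes of x⊤; consequently the general-election winner under σ is always x⊤ or x⊥. -/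
open Classical in
lemma fptpWinner_max {A : Type*} [Fintype A] [Nonempty A]
    (r : LinearOrder A) (t : A → ℕ) : ∀ b, t b ≤ t (fptpWinner r t) := by
  have h := @Finset.min'_mem A r (Finset.univ.filter fun a => ∀ b, t b ≤ t a) (by
    obtain ⟨a, -, ha⟩ := Finset.exists_max_image (Finset.univ : Finset A) t
      ⟨Classical.arbitrary A, Finset.mem_univ _⟩
    exact ⟨a, Finset.mem_filter.mpr ⟨Finset.mem_univ _, fun b => ha b (Finset.mem_univ _)⟩⟩)
  exact (Finset.mem_filter.mp h).2

/-- in the BR-reduction election for `Φ`, every non-anchor candidate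
receives at most `q` votes, strictly fewer than the `q + 2` votes of `x⊤`;
consequently the general-election winner is always `x⊤` or `x⊥`. -/
theorem stmt2 {p : ℕ} (Φ : CNF3 p) (r : LinearOrder (Cand p))
    (hr : r.lt (xBot p) (xTop p)) (σ : Fin p → Bool) :
    (∀ l : Lit p,
      tally Φ σ (Sum.inl l) ≤ Φ.length ∧
      tally Φ σ (Sum.inl l) < tally Φ σ (xTop p)) ∧
    (geWinner Φ r σ = xTop p ∨ geWinner Φ r σ = xBot p) := by
  have hle : ∀ l : Lit p, tally Φ σ (Sum.inl l) ≤ Φ.length := fun l =>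
    List.length_filter_le _ _
  have htop : tally Φ σ (xTop p) = Φ.length + 2 := rfl
  refine ⟨fun l => ⟨hle l, by rw [htop]; exact lt_of_le_of_lt (hle l) (by omega)⟩, ?_⟩
  have hmax := fptpWinner_max r (tally Φ σ) (xTop p)
  rcases hw : geWinner Φ r σ with l | b
  · exfalso
    have := hle l
    rw [show geWinner Φ r σ = fptpWinner r (tally Φ σ) from rfl] at hw
    rw [hw] at hmax
    rw [htop] at hmax
    omega
  · cases b
    · right; rfl
    · left; rfl
end

section
/- Consider the BR-reduction election for a 3-CNF formula Φ with p variables and q clauses, viewed as a one-strategic-voter game in which the voter chooses an assignment σ : Fin p → Bool and receives utility u(winner(σ)), where u : A → ℚ satisfies u(x⊤) > u(x⊥). If the all-false assignment σ₀ (σ₀ k = false for all k) falsifies at least one clause of Φ, then σ₀ is a pure Nash equilibrium — i.e., u(winner(σ₀)) ≥ u(winner(σ)) for every assignment σ — if and only if Φ is unsatisfiable. (Correctness of the coNP-hardness reduction for Nash-equilibrium verification.) -/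

lemma fptpWinner_eq {A : Type*} [Fintype A] [Nonempty A]
    (r : LinearOrder A) (t : A → ℕ) (a : A)
    (h1 : ∀ b, t b ≤ t a) (h2 : ∀ b, (∀ c, t c ≤ t b) → r.le a b) :
    fptpWinner r t = a := by
  letI := r
  unfold fptpWinner
  apply le_antisymm
  · exact Finset.min'_le _ a (Finset.mem_filter.mpr ⟨Finset.mem_univ _, h1⟩)
  · apply Finset.le_min'
    intro b hb
    exact h2 b (Finset.mem_filter.mp hb).2

lemma winner_of_sat {p : ℕ} (Φ : CNF3 p) (r : LinearOrder (Cand p))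
    (σ : Fin p → Bool) (h : Satisfies σ Φ) : geWinner Φ r σ = xTop p := by
  have hlt : ∀ a : Cand p, a ≠ xTop p → tally Φ σ a < tally Φ σ (xTop p) := by
    intro a ha
    match a with
    | Sum.inr true => exact absurd rfl ha
    | Sum.inr false =>
        have he : (Φ.filter (fun c => !(satClause σ c))) = [] := by
          apply List.filter_eq_nil_iff.mpr
          intro c hc
          simp [h c hc]
        simp [tally, xTop, he]
    | Sum.inl l =>
        have := List.length_filter_le (fun c => decide (firstTrueLit σ c = some l)) Φ
        show (Φ.filter (fun c => decide (firstTrueLit σ c = some l))).length < Φ.length + 2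
        omega
  apply fptpWinner_eq
  · intro b
    by_cases hb : b = xTop p
    · subst hb; exact le_rfl
    · exact (hlt b hb).le
  · intro b hmax
    by_cases hb : b = xTop p
    · subst hb; exact r.le_refl _
    · exact absurd (hmax (xTop p)) (not_le.mpr (hlt b hb))

lemma winner_of_unsat {p : ℕ} (Φ : CNF3 p) (r : LinearOrder (Cand p))
    (hr : r.lt (xBot p) (xTop p))
    (σ : Fin p → Bool) (h : ∃ c ∈ Φ, satClause σ c = false) :
    geWinner Φ r σ = xBot p := by
  obtain ⟨c, hc, hcf⟩ := h
  have hmem : c ∈ Φ.filter (fun c => !(satClause σ c)) :=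
    List.mem_filter.mpr ⟨hc, by simp [hcf]⟩
  have hf : 1 ≤ (Φ.filter (fun c => !(satClause σ c))).length :=
    List.length_pos_iff.mpr (List.ne_nil_of_mem hmem)
  have hbot : tally Φ σ (xBot p) = (Φ.length + 1) + (Φ.filter (fun c => !(satClause σ c))).length := rfl
  have h1 : ∀ b, tally Φ σ b ≤ tally Φ σ (xBot p) := by
    intro b
    match b with
    | Sum.inr false => exact le_rfl
    | Sum.inr true => show Φ.length + 2 ≤ _; rw [hbot]; omega
    | Sum.inl l =>
        have := List.length_filter_le (fun c => decide (firstTrueLit σ c = some l)) Φ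
        show (Φ.filter _).length ≤ _
        rw [hbot]; omega
  apply fptpWinner_eq
  · exact h1
  · intro b hmax
    match b with
    | Sum.inr false => exact r.le_refl _
    | Sum.inr true => exact ((r.lt_iff_le_not_ge (xBot p) (xTop p)).mp hr).1
    | Sum.inl l =>
        exfalso
        have h2 : tally Φ σ (xBot p) ≤ tally Φ σ (Sum.inl l) := hmax _
        have h3 : tally Φ σ (Sum.inl l) ≤ Φ.length :=
          List.length_filter_le (fun c => decide (firstTrueLit σ c = some l)) Φ
        rw [hbot] at h2; omega

/-- correctness of the coNP-hardness reduction for NE verification.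
View the BR-reduction election as a one-strategic-voter game in which the voter
chooses an assignment `σ` and receives utility `u (geWinner Φ r σ)`, where
`u x⊤ > u x⊥`.  If the all-false assignment `σ₀` falsifies at least one clause
of `Φ`, then `σ₀` is a pure Nash equilibrium iff `Φ` is unsatisfiable. -/
theorem stmt3 {p : ℕ} (Φ : CNF3 p) (r : LinearOrder (Cand p))
    (hr : r.lt (xBot p) (xTop p)) (u : Cand p → ℚ)
    (hu : u (xBot p) < u (xTop p))
    (σ₀ : Fin p → Bool) (hσ₀ : σ₀ = fun _ => false)
    (hfals : ∃ c ∈ Φ, satClause σ₀ c = false) :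
    (∀ σ : Fin p → Bool, u (geWinner Φ r σ) ≤ u (geWinner Φ r σ₀)) ↔
      ¬ ∃ σ : Fin p → Bool, Satisfies σ Φ := by
  constructor
  · intro hne hsat
    obtain ⟨σ, hσ⟩ := hsat
    have h1 := winner_of_sat Φ r σ hσ
    have h0 := winner_of_unsat Φ r hr σ₀ hfals
    have := hne σ
    rw [h1, h0] at this
    exact absurd this (not_le.mpr hu)
  · intro hunsat σ
    have hσ : ∃ c ∈ Φ, satClause σ c = false := by
      by_contra hcon
      push_neg at hcon
      exact hunsat ⟨σ, fun c hc => by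
        have := hcon c hc
        cases hsc : satClause σ c with
        | false => exact absurd hsc this
        | true => rfl⟩
    rw [winner_of_unsat Φ r hr σ hσ, winner_of_unsat Φ r hr σ₀ hfals]
end

section
/- For every nX, nY ∈ ℕ and every predicate φ : (Fin nX → Bool) → (Fin nY → Bool) → Prop, the game G_φ has a pure Nash equilibrium if and only if there exists x : Fin nX → Bool such that φ x y holds for all y : Fin nY → Bool. (Correctness of the Σ₂ᴾ-hardness reduction from 2-QBF for pure Nash equilibrium existence in primary elections.) -/
/-! The two-player game `G_φ` of the Σ₂ᴾ-hardness reduction: player Odd chooses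
`(x, b_o)`, player Even chooses `(y, b_e)`; Odd wins iff `φ x y` holds or
`b_o = b_e`; Odd's utility is 1 if Odd wins and 0 otherwise, Even's is the
complement. -/

open Classical in
/-- Odd's utility at the profile `((x, bo), (y, be))`. -/
noncomputable def uOdd {nX nY : ℕ} (φ : (Fin nX → Bool) → (Fin nY → Bool) → Prop)
    (x : Fin nX → Bool) (bo : Bool) (y : Fin nY → Bool) (be : Bool) : ℚ :=
  if φ x y ∨ bo = be then 1 else 0

/-- Even's utility: one minus Odd's. -/
noncomputable def uEven {nX nY : ℕ} (φ : (Fin nX → Bool) → (Fin nY → Bool) → Prop)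
    (x : Fin nX → Bool) (bo : Bool) (y : Fin nY → Bool) (be : Bool) : ℚ :=
  1 - uOdd φ x bo y be

/-- A pure Nash equilibrium of `G_φ`: neither player can strictly increase her
own utility by unilaterally changing her own strategy. -/
def IsPureNE {nX nY : ℕ} (φ : (Fin nX → Bool) → (Fin nY → Bool) → Prop)
    (x : Fin nX → Bool) (bo : Bool) (y : Fin nY → Bool) (be : Bool) : Prop :=
  (∀ (x' : Fin nX → Bool) (bo' : Bool), uOdd φ x' bo' y be ≤ uOdd φ x bo y be) ∧
  (∀ (y' : Fin nY → Bool) (be' : Bool), uEven φ x bo y' be' ≤ uEven φ x bo y be)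

/-- `G_φ` has a pure Nash equilibrium iff
`∃ x, ∀ y, φ x y` holds. -/
theorem stmt4 (nX nY : ℕ) (φ : (Fin nX → Bool) → (Fin nY → Bool) → Prop) :
    (∃ (x : Fin nX → Bool) (bo : Bool) (y : Fin nY → Bool) (be : Bool),
        IsPureNE φ x bo y be) ↔
      ∃ x : Fin nX → Bool, ∀ y : Fin nY → Bool, φ x y := by
  constructor
  · rintro ⟨x, bo, y, be, hO, hE⟩
    refine ⟨x, fun y' => ?_⟩
    -- Odd can guarantee 1 by matching bits
    have h1 : uOdd φ x bo y be = 1 := by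
      rcases em (φ x y ∨ bo = be) with hc | hc
      · simp [uOdd, hc]
      · have h := hO x be
        simp [uOdd, hc] at h
        linarith
    by_contra hφ
    have h2 := hE y' (!bo)
    rw [uEven, uEven, h1] at h2
    simp [uOdd, hφ] at h2
    linarith
  · rintro ⟨x, hx⟩
    refine ⟨x, true, fun _ => true, true, fun x' bo' => ?_, fun y' be' => ?_⟩
    · simp [uOdd]
      split <;> simp [hx]
    · simp [uEven, uOdd, hx]
end

section
/- Fix p ∈ ℕ, a role function Q : Fin p → Bool, and a predicate φ : (Fin p → Bool) → Prop. There exists a strategy f for the existential player (a family of functions f_k : (Fin k → Bool) → Bool, one for each stage k with Q k = true) such that every assignment σ : Fin p → Bool consistent with f satisfies φ, if and only if the quantified formula T_Q(φ) is true. (Game-semantics correctness underlying the PSPACE-hardness of sequential dominant strategies.) -/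
/-- The quantified formula `T_Q(ψ)`: stage `k` contributes `∃ x_k` if
`Q k = true` and `∀ x_k` if `Q k = false`, applied in increasing order of `k`. -/
def TQ : (p : ℕ) → (Fin p → Bool) → ((Fin p → Bool) → Prop) → Prop
  | 0, _, ψ => ψ (fun k => k.elim0)
  | p + 1, Q, ψ =>
    if Q 0 then
      ∃ b : Bool, TQ p (fun k => Q k.succ) (fun σ => ψ (Fin.cons b σ))
    else
      ∀ b : Bool, TQ p (fun k => Q k.succ) (fun σ => ψ (Fin.cons b σ))

/-- An assignment `σ` is consistent with the existential player's strategy `f`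
iff at every existential stage `k` (i.e. `Q k = true`), `σ k` equals `f k`
applied to the restriction of `σ` to the indices smaller than `k`. -/
def Consistent {p : ℕ} (Q : Fin p → Bool)
    (f : ∀ k : Fin p, (Fin (k : ℕ) → Bool) → Bool) (σ : Fin p → Bool) : Prop :=
  ∀ k : Fin p, Q k = true →
    σ k = f k (fun j => σ ⟨(j : ℕ), lt_trans j.isLt k.isLt⟩)

lemma cons_restrict {p : ℕ} (b : Bool) (τ : Fin p → Bool) (k : Fin p)
    (j : Fin ((k.succ : Fin (p+1)) : ℕ)) (h : (j:ℕ) < p+1) :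
    Fin.cons (α := fun _ => Bool) b τ ⟨(j:ℕ), h⟩ =
      Fin.cons (α := fun _ => Bool) b
        (fun i : Fin (k:ℕ) => τ ⟨(i:ℕ), lt_trans i.isLt k.isLt⟩) j := by
  cases j using Fin.cases with
  | zero => rfl
  | succ i => rfl

lemma consistent_cons {p : ℕ} (Q : Fin (p+1) → Bool)
    (f : ∀ k : Fin (p+1), (Fin (k:ℕ) → Bool) → Bool) (b : Bool) (τ : Fin p → Bool) :
    Consistent Q f (Fin.cons b τ) ↔
      ((Q 0 = true → b = f 0 (fun j => j.elim0)) ∧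
        Consistent (fun k => Q k.succ)
          (fun k v => f k.succ (Fin.cons b v)) τ) := by
  constructor
  · intro h
    refine ⟨fun h0 => ?_, fun k hk => ?_⟩
    · have := h 0 h0
      convert this using 2
      · simp
      funext j; exact j.elim0
    · have := h k.succ hk
      convert this using 2
      · simp
      funext j
      exact (cons_restrict b τ k j _).symm
  · rintro ⟨h0, ht⟩ k hk
    cases k using Fin.cases with
    | zero =>
      have := h0 hk
      convert this using 2
      · simp
      funext j; exact j.elim0
    | succ k =>
      have := ht k hk
      convert this using 2
      · simp
      funext j
      exact cons_restrict b τ k j _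

/-- the existential player has a strategy `f` (a family of
functions `f_k : (Fin k → Bool) → Bool`, used at the stages with `Q k = true`)
such that every assignment consistent with `f` satisfies `φ`, iff the
quantified formula `T_Q(φ)` is true. -/
theorem stmt7 (p : ℕ) (Q : Fin p → Bool) (φ : (Fin p → Bool) → Prop) :
    (∃ f : ∀ k : Fin p, (Fin (k : ℕ) → Bool) → Bool,
        ∀ σ : Fin p → Bool, Consistent Q f σ → φ σ) ↔
      TQ p Q φ := by
  induction p with
  | zero =>
    simp only [TQ]
    constructor
    · rintro ⟨f, hf⟩
      exact hf _ (fun k => k.elim0)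
    · intro h
      refine ⟨fun k => k.elim0, fun σ _ => ?_⟩
      have : σ = fun k => k.elim0 := funext fun k => k.elim0
      rw [this]; exact h
  | succ p ih =>
    simp only [TQ]
    by_cases hQ : Q 0 = true
    · rw [if_pos hQ]
      constructor
      · rintro ⟨f, hf⟩
        refine ⟨f 0 (fun j => j.elim0), ?_⟩
        rw [← ih]
        exact ⟨fun k v => f k.succ (Fin.cons (f 0 (fun j => j.elim0)) v),
          fun τ hτ => hf _ ((consistent_cons Q f _ τ).2 ⟨fun _ => rfl, hτ⟩)⟩
      · rintro ⟨b, hb⟩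
        rw [← ih] at hb
        obtain ⟨g, hg⟩ := hb
        refine ⟨fun k => Fin.cases (fun _ => b) (fun k w => g k (fun j => w j.succ)) k,
          fun σ hσ => ?_⟩
        have hcons := (consistent_cons Q _ (σ 0) (Fin.tail σ)).1
          (by rwa [Fin.cons_self_tail])
        have hb0 : σ 0 = b := hcons.1 hQ
        have hφ := hg (Fin.tail σ) hcons.2
        rw [← Fin.cons_self_tail σ, hb0]
        exact hφ
    · rw [if_neg hQ]
      constructor
      · rintro ⟨f, hf⟩ b
        rw [← ih]
        exact ⟨fun k v => f k.succ (Fin.cons b v),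
          fun τ hτ => hf _ ((consistent_cons Q f b τ).2
            ⟨fun h0 => absurd h0 hQ, hτ⟩)⟩
      · intro h
        choose g hg using fun b =>
          (ih (fun k => Q k.succ) (fun τ => φ (Fin.cons b τ))).2 (h b)
        refine ⟨fun k => Fin.cases (fun _ => true)
          (fun k w => g (w ⟨0, Nat.succ_pos _⟩) k (fun j => w j.succ)) k, fun σ hσ => ?_⟩
        have hcons := (consistent_cons Q _ (σ 0) (Fin.tail σ)).1
          (by rwa [Fin.cons_self_tail])
        have hφ := hg (σ 0) (Fin.tail σ) hcons.2
        rw [← Fin.cons_self_tail σ]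
        exact hφ
end

section
/- Fix a 3-CNF formula Φ with p variables and q clauses and a role function Q : Fin p → Bool. In the sequential version of the BR-reduction election, where the nominee of variable party k (i.e., the value σ k) is chosen at stage k — by the distinguished voter i⋆ if Q k = true and by an adversary if Q k = false, each observing all earlier nominees — the voter i⋆ has a strategy guaranteeing that the general-election winner is x⊤ against every adversary behaviour (i.e., there is a family f_k : (Fin k → Bool) → Bool for the stages with Q k = true such that every assignment σ consistent with f has winner(σ) = x⊤) if and only if the quantified formula T_Q(σ satisfies Φ) is true. (Correctness of the PSPACE-hardness reduction for SeqDS-≥U.) -/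
lemma tally_lit_le {p : ℕ} (Φ : CNF3 p) (σ : Fin p → Bool) (l : Lit p) :
    tally Φ σ (Sum.inl l) ≤ Φ.length := List.length_filter_le _ _

lemma sat_iff_falsified_zero {p : ℕ} (Φ : CNF3 p) (σ : Fin p → Bool) :
    Satisfies σ Φ ↔ (Φ.filter (fun c => !(satClause σ c))).length = 0 := by
  rw [List.length_eq_zero_iff, List.filter_eq_nil_iff, Satisfies]
  simp

lemma winner_iff {p : ℕ} (Φ : CNF3 p) (r : LinearOrder (Cand p))
    (hr : r.lt (xBot p) (xTop p)) (σ : Fin p → Bool) :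
    geWinner Φ r σ = xTop p ↔ Satisfies σ Φ := by
  classical
  set S : Finset (Cand p) :=
    Finset.univ.filter fun a => ∀ b, tally Φ σ b ≤ tally Φ σ a with hS
  have hSne : S.Nonempty := by
    obtain ⟨a, -, ha⟩ := Finset.exists_max_image (Finset.univ : Finset (Cand p)) (tally Φ σ)
      ⟨Classical.arbitrary _, Finset.mem_univ _⟩
    exact ⟨a, Finset.mem_filter.mpr ⟨Finset.mem_univ _, fun b => ha b (Finset.mem_univ _)⟩⟩
  have hgw : geWinner Φ r σ = @Finset.min' _ r S hSne := by
    rw [geWinner, fptpWinner]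
  have htop : tally Φ σ (xTop p) = Φ.length + 2 := rfl
  have hbot : tally Φ σ (xBot p)
      = (Φ.length + 1) + (Φ.filter (fun c => !(satClause σ c))).length := rfl
  constructor
  · intro hw
    by_contra hns
    have hF : 1 ≤ (Φ.filter (fun c => !(satClause σ c))).length := by
      rcases Nat.eq_zero_or_pos (Φ.filter (fun c => !(satClause σ c))).length with h0 | h1
      · exact absurd ((sat_iff_falsified_zero Φ σ).mpr h0) hns
      · exact h1
    have hmemB : xBot p ∈ S := by
      refine Finset.mem_filter.mpr ⟨Finset.mem_univ _, ?_⟩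
      intro b
      rcases b with l | b
      · have := tally_lit_le Φ σ l; rw [hbot]; omega
      · cases b
        · exact Nat.le_refl _
        · rw [hbot]; show Φ.length + 2 ≤ _; omega
    have hle := @Finset.min'_le _ r S (xBot p) hmemB
    rw [← hgw, hw] at hle
    exact absurd (@lt_of_le_of_lt _ r.toPartialOrder.toPreorder _ _ _ hle hr) (@lt_irrefl _ r.toPartialOrder.toPreorder _)
  · intro hsat
    have hF : (Φ.filter (fun c => !(satClause σ c))).length = 0 :=
      (sat_iff_falsified_zero Φ σ).mp hsat
    have hmem := @Finset.min'_mem _ r S hSne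
    have hwS : ∀ b, tally Φ σ b ≤ tally Φ σ (@Finset.min' _ r S hSne) :=
      (Finset.mem_filter.mp hmem).2
    have hkey := hwS (xTop p)
    rw [htop] at hkey
    rw [hgw]
    rcases hwv : @Finset.min' _ r S hSne with l | b
    · rw [hwv] at hkey
      have h1 := tally_lit_le Φ σ l
      omega
    · cases b
      · rw [hwv] at hkey
        have h2 : tally Φ σ (Sum.inr false)
            = (Φ.length + 1) + (Φ.filter (fun c => !(satClause σ c))).length := rfl
        omega
      · rfl

lemma fin_zero_fun_eq {p : ℕ} {α : Sort*} (g g' : Fin ((0 : Fin (p+1)) : ℕ) → α) : g = g' :=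
  funext fun j => absurd j.isLt (by simp)

lemma cons_mk_zero {n : ℕ} {α : Sort*} (b : α) (g : Fin n → α) (h : 0 < n+1) :
    (Fin.cons b g : ∀ _ : Fin (n+1), α) ⟨0, h⟩ = b := rfl

lemma cons_mk_succ {n : ℕ} {α : Sort*} (b : α) (g : Fin n → α) (v : ℕ) (h : v+1 < n+1) :
    (Fin.cons b g : ∀ _ : Fin (n+1), α) ⟨v+1, h⟩ = g ⟨v, Nat.lt_of_succ_lt_succ h⟩ := rfl

lemma restrict_cons {p : ℕ} (b : Bool) (σ : Fin p → Bool) (i : Fin p) :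
    (fun j : Fin ((i.succ : Fin (p+1)) : ℕ) =>
        (Fin.cons b σ : ∀ _ : Fin (p+1), Bool) ⟨(j : ℕ), lt_trans j.isLt i.succ.isLt⟩)
      = Fin.cons b (fun j : Fin (i : ℕ) => σ ⟨(j : ℕ), lt_trans j.isLt i.isLt⟩) := by
  funext j
  rcases j with ⟨jv, hj⟩
  cases jv with
  | zero => exact (cons_mk_zero ..).trans (cons_mk_zero ..).symm
  | succ m =>
    exact (cons_mk_succ b σ m (lt_trans hj i.succ.isLt)).trans
      ((cons_mk_succ b (fun j : Fin (i : ℕ) => σ ⟨(j : ℕ), lt_trans j.isLt i.isLt⟩) m hj).symm)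

lemma cons_consistent_aux {p : ℕ} (Q : Fin (p+1) → Bool)
    (f : ∀ k : Fin (p+1), (Fin (k : ℕ) → Bool) → Bool) (b : Bool)
    (hb : Q 0 = true → ∀ g, b = f 0 g)
    (σ' : Fin p → Bool)
    (hσ' : Consistent (fun k => Q k.succ)
      (fun k τ => f k.succ (Fin.cons b τ)) σ') :
    Consistent Q f (Fin.cons b σ') := by
  intro k
  induction k using Fin.cases with
  | zero =>
    intro hk
    rw [Fin.cons_zero]
    exact hb hk _
  | succ i =>
    intro hk
    rw [Fin.cons_succ, restrict_cons b σ' i]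
    exact hσ' i hk

lemma game_iff : ∀ (p : ℕ) (Q : Fin p → Bool) (ψ : (Fin p → Bool) → Prop),
    (∃ f : ∀ k : Fin p, (Fin (k : ℕ) → Bool) → Bool,
        ∀ σ : Fin p → Bool, Consistent Q f σ → ψ σ) ↔ TQ p Q ψ
  | 0, Q, ψ => by
    constructor
    · rintro ⟨f, hf⟩
      exact hf _ (fun k => k.elim0)
    · intro h
      refine ⟨fun k => k.elim0, fun σ _ => ?_⟩
      have hσ : σ = fun k => k.elim0 := funext fun k => k.elim0
      rw [hσ]; exact h
  | p + 1, Q, ψ => by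
    have IH := game_iff p
    show _ ↔ (if Q 0 = true then
        ∃ b : Bool, TQ p (fun k => Q k.succ) (fun σ => ψ (Fin.cons b σ))
      else
        ∀ b : Bool, TQ p (fun k => Q k.succ) (fun σ => ψ (Fin.cons b σ)))
    by_cases hQ : Q 0 = true
    · rw [if_pos hQ]
      constructor
      · rintro ⟨f, hf⟩
        refine ⟨f 0 (fun _ => true), (IH _ _).mp
          ⟨fun k τ => f k.succ (Fin.cons (f 0 (fun _ => true)) τ), ?_⟩⟩
        intro σ' hσ'
        exact hf _ (cons_consistent_aux Q f _
          (fun _ g => congrArg (f 0) (fin_zero_fun_eq _ _)) σ' hσ')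
      · rintro ⟨b, hTQ⟩
        obtain ⟨f', hf'⟩ := (IH _ _).mpr hTQ
        refine ⟨Fin.cases (motive := fun k => (Fin (k : ℕ) → Bool) → Bool)
          (fun _ => b) (fun i τ => f' i (fun j => τ j.succ)), ?_⟩
        intro σ hσ
        have hb0 : σ 0 = b := hσ 0 hQ
        have hcons : σ = Fin.cons b (Fin.tail σ) := by
          rw [← hb0, Fin.cons_self_tail]
        rw [hcons]
        refine hf' (Fin.tail σ) ?_
        intro i hk
        exact hσ i.succ hk
    · rw [if_neg hQ]
      constructor
      · rintro ⟨f, hf⟩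
        intro b
        refine (IH _ _).mp ⟨fun k τ => f k.succ (Fin.cons b τ), ?_⟩
        intro σ' hσ'
        exact hf _ (cons_consistent_aux Q f b (fun h => absurd h hQ) σ' hσ')
      · intro h
        have hh := fun b => (IH _ _).mpr (h b)
        choose F hF using hh
        refine ⟨Fin.cases (motive := fun k => (Fin (k : ℕ) → Bool) → Bool)
          (fun _ => true) (fun i τ => F (τ ⟨0, Nat.succ_pos _⟩) i (fun j => τ j.succ)), ?_⟩
        intro σ hσ
        have hcons : σ = Fin.cons (σ 0) (Fin.tail σ) := (Fin.cons_self_tail σ).symm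
        rw [hcons]
        refine hF (σ 0) (Fin.tail σ) ?_
        intro i hk
        exact hσ i.succ hk
/-- correctness of the PSPACE-hardness reduction for SeqDS-≥U.
In the sequential BR-reduction election, where the nominee `σ k` of variable
party `k` is chosen at stage `k` by `i⋆` if `Q k = true` and by the adversary
if `Q k = false` (each observing all earlier nominees), the voter `i⋆` has a
strategy guaranteeing that the general-election winner is `x⊤` against every
adversary behaviour iff the quantified formula `T_Q(σ satisfies Φ)` is true. -/
theorem stmt8 {p : ℕ} (Φ : CNF3 p) (Q : Fin p → Bool)
    (r : LinearOrder (Cand p)) (hr : r.lt (xBot p) (xTop p)) :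
    (∃ f : ∀ k : Fin p, (Fin (k : ℕ) → Bool) → Bool,
        ∀ σ : Fin p → Bool, Consistent Q f σ → geWinner Φ r σ = xTop p) ↔
      TQ p Q (fun σ => Satisfies σ Φ) := by
  rw [← game_iff p Q (fun σ => Satisfies σ Φ)]
  exact exists_congr fun f => forall_congr' fun σ =>
    imp_congr_right fun _ => winner_iff Φ r hr σ
end

section
/- For every k ∈ ℕ and every predicate φ : (Fin k → Bool) → (Fin k → Bool) → Prop, the extensive-form game Γ_φ admits a pure subgame-perfect equilibrium if and only if the alternating quantified formula ∃x₁ ∀y₁ ∃x₂ ∀y₂ ⋯ ∃x_k ∀y_k, φ(x₁,…,x_k)(y₁,…,y_k) is true. (Correctness of the PSPACE-hardness reduction for pure SPNE existence in sequential primaries.) -/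
/-! The extensive-form game `Γ_φ`.  At stage 0 Odd and Even simultaneously
choose `b_o, b_e ∈ Bool`; then for `i = 1, …, k` in order, Odd chooses
`x_i ∈ Bool` and afterwards Even chooses `y_i ∈ Bool`, each observing all
previously made choices.  At the terminal history Odd wins iff `φ x y` holds
or `b_o = b_e`; Odd's payoff is 1 if she wins and 0 otherwise, Even's payoff is
the complement.

Histories after stage 0 are encoded as `(b_o, b_e, ms)`, where `ms : List Bool`
is the list of alternating moves made so far (even positions are Odd's moves
`x_i`, odd positions Even's moves `y_i`).  A move function assigns to each such
history a choice; a pure strategy of a player is her stage-0 choice together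
with a move function. -/

/-- A move function: a choice at every history `(b_o, b_e, ms)`. -/
abbrev MoveFn : Type := Bool → Bool → List Bool → Bool

/-- One step of play: if the alternating phase is not over, the player to move
(Odd at even positions, Even at odd positions) appends her chosen move. -/
def stepPlay (k : ℕ) (fO fE : MoveFn) (bo be : Bool) (ms : List Bool) : List Bool :=
  if ms.length < 2 * k then
    if ms.length % 2 = 0 then ms ++ [fO bo be ms] else ms ++ [fE bo be ms]
  else ms

/-- Iterated play with fuel. -/
def playout (k : ℕ) (fO fE : MoveFn) (bo be : Bool) : ℕ → List Bool → List Bool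
  | 0, ms => ms
  | n + 1, ms => playout k fO fE bo be n (stepPlay k fO fE bo be ms)

/-- The terminal history reached from the history `(bo, be, ms)` when the
players follow the move functions `fO` and `fE`. -/
def fullPlay (k : ℕ) (fO fE : MoveFn) (bo be : Bool) (ms : List Bool) : List Bool :=
  playout k fO fE bo be (2 * k) ms

/-- Odd's alternating moves `x` read off a terminal history. -/
def xOf (k : ℕ) (ms : List Bool) : Fin k → Bool := fun i => ms.getD (2 * (i : ℕ)) false

/-- Even's alternating moves `y` read off a terminal history. -/
def yOf (k : ℕ) (ms : List Bool) : Fin k → Bool := fun i => ms.getD (2 * (i : ℕ) + 1) false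

open Classical in
/-- Odd's payoff at a terminal history: 1 if `φ x y ∨ b_o = b_e`, else 0. -/
noncomputable def payOdd (k : ℕ) (φ : (Fin k → Bool) → (Fin k → Bool) → Prop)
    (bo be : Bool) (ms : List Bool) : ℚ :=
  if φ (xOf k ms) (yOf k ms) ∨ bo = be then 1 else 0

/-- Even's payoff: the complement of Odd's. -/
noncomputable def payEven (k : ℕ) (φ : (Fin k → Bool) → (Fin k → Bool) → Prop)
    (bo be : Bool) (ms : List Bool) : ℚ :=
  1 - payOdd k φ bo be ms

/-- A pure subgame-perfect equilibrium of `Γ_φ`: the profile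
`((boS, fO), (beS, fE))` induces a Nash equilibrium in the subgame rooted at
every history — at the root (where stage-0 choices may be changed together
with the continuation) and at every history `(bo, be, ms)` after stage 0
(where only the continuation move function may be changed). -/
structure IsSPNE (k : ℕ) (φ : (Fin k → Bool) → (Fin k → Bool) → Prop)
    (boS beS : Bool) (fO fE : MoveFn) : Prop where
  root_odd : ∀ (bo' : Bool) (fO' : MoveFn),
    payOdd k φ bo' beS (fullPlay k fO' fE bo' beS []) ≤
      payOdd k φ boS beS (fullPlay k fO fE boS beS [])
  root_even : ∀ (be' : Bool) (fE' : MoveFn),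
    payEven k φ boS be' (fullPlay k fO fE' boS be' []) ≤
      payEven k φ boS beS (fullPlay k fO fE boS beS [])
  sub_odd : ∀ (bo be : Bool) (ms : List Bool), ms.length ≤ 2 * k →
    ∀ fO' : MoveFn,
      payOdd k φ bo be (fullPlay k fO' fE bo be ms) ≤
        payOdd k φ bo be (fullPlay k fO fE bo be ms)
  sub_even : ∀ (bo be : Bool) (ms : List Bool), ms.length ≤ 2 * k →
    ∀ fE' : MoveFn,
      payEven k φ bo be (fullPlay k fO fE' bo be ms) ≤
        payEven k φ bo be (fullPlay k fO fE bo be ms)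

/-- The alternating quantified formula `∃x₁ ∀y₁ ∃x₂ ∀y₂ ⋯ ∃x_k ∀y_k, φ x y`,
quantifying the coordinates of `x` and `y` alternately in increasing order. -/
def altQ : (k : ℕ) → ((Fin k → Bool) → (Fin k → Bool) → Prop) → Prop
  | 0, φ => φ (fun i => i.elim0) (fun i => i.elim0)
  | k + 1, φ => ∃ x1 : Bool, ∀ y1 : Bool,
      altQ k (fun x y => φ (Fin.cons x1 x) (Fin.cons y1 y))

/-! ### Auxiliary development -/

/-- Backward-induction value of the subgame at history `(bo, be, ms)`. -/
noncomputable def val (k : ℕ) (φ : (Fin k → Bool) → (Fin k → Bool) → Prop)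
    (bo be : Bool) (ms : List Bool) : ℚ :=
  if h : ms.length < 2 * k then
    if ms.length % 2 = 0 then
      max (val k φ bo be (ms ++ [false])) (val k φ bo be (ms ++ [true]))
    else
      min (val k φ bo be (ms ++ [false])) (val k φ bo be (ms ++ [true]))
  else payOdd k φ bo be ms
termination_by 2 * k - ms.length
decreasing_by all_goals (simp only [List.length_append, List.length_cons, List.length_nil]; omega)

lemma val_terminal {k : ℕ} {φ : (Fin k → Bool) → (Fin k → Bool) → Prop} {bo be : Bool}
    {ms : List Bool} (h : ¬ ms.length < 2 * k) :
    val k φ bo be ms = payOdd k φ bo be ms := by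
  rw [val, dif_neg h]

lemma val_max {k : ℕ} {φ : (Fin k → Bool) → (Fin k → Bool) → Prop} {bo be : Bool}
    {ms : List Bool} (h : ms.length < 2 * k) (he : ms.length % 2 = 0) :
    val k φ bo be ms =
      max (val k φ bo be (ms ++ [false])) (val k φ bo be (ms ++ [true])) := by
  rw [val, dif_pos h, if_pos he]

lemma val_min {k : ℕ} {φ : (Fin k → Bool) → (Fin k → Bool) → Prop} {bo be : Bool}
    {ms : List Bool} (h : ms.length < 2 * k) (he : ¬ ms.length % 2 = 0) :
    val k φ bo be ms =
      min (val k φ bo be (ms ++ [false])) (val k φ bo be (ms ++ [true])) := by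
  rw [val, dif_pos h, if_neg he]

lemma payOdd_nonneg {k : ℕ} {φ : (Fin k → Bool) → (Fin k → Bool) → Prop} {bo be : Bool}
    {ms : List Bool} : 0 ≤ payOdd k φ bo be ms := by
  unfold payOdd; split <;> norm_num

lemma payOdd_le_one {k : ℕ} {φ : (Fin k → Bool) → (Fin k → Bool) → Prop} {bo be : Bool}
    {ms : List Bool} : payOdd k φ bo be ms ≤ 1 := by
  unfold payOdd; split <;> norm_num

lemma payOdd_of_eq {k : ℕ} {φ : (Fin k → Bool) → (Fin k → Bool) → Prop} {bo be : Bool}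
    {ms : List Bool} (h : bo = be) : payOdd k φ bo be ms = 1 := by
  unfold payOdd; rw [if_pos (Or.inr h)]

lemma val_zero_or_one {k : ℕ} {φ : (Fin k → Bool) → (Fin k → Bool) → Prop} {bo be : Bool} :
    ∀ (n : ℕ) (ms : List Bool), 2 * k - ms.length ≤ n →
      val k φ bo be ms = 0 ∨ val k φ bo be ms = 1 := by
  intro n
  induction n with
  | zero =>
      intro ms hms
      rw [val_terminal (by omega)]
      unfold payOdd; split <;> simp
  | succ n ih =>
      intro ms hms
      by_cases h : ms.length < 2 * k
      · have h0 := ih (ms ++ [false]) (by simp; omega)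
        have h1 := ih (ms ++ [true]) (by simp; omega)
        by_cases he : ms.length % 2 = 0
        · rw [val_max h he]
          rcases h0 with h0 | h0 <;> rcases h1 with h1 | h1 <;> rw [h0, h1] <;> norm_num
        · rw [val_min h he]
          rcases h0 with h0 | h0 <;> rcases h1 with h1 | h1 <;> rw [h0, h1] <;> norm_num
      · rw [val_terminal h]
        unfold payOdd; split <;> simp

lemma val_of_eq {k : ℕ} {φ : (Fin k → Bool) → (Fin k → Bool) → Prop} {bo be : Bool}
    (hbe : bo = be) :
    ∀ (n : ℕ) (ms : List Bool), 2 * k - ms.length ≤ n → val k φ bo be ms = 1 := by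
  intro n
  induction n with
  | zero =>
      intro ms hms
      rw [val_terminal (by omega), payOdd_of_eq hbe]
  | succ n ih =>
      intro ms hms
      by_cases h : ms.length < 2 * k
      · have h0 := ih (ms ++ [false]) (by simp; omega)
        have h1 := ih (ms ++ [true]) (by simp; omega)
        by_cases he : ms.length % 2 = 0
        · rw [val_max h he, h0, h1]; norm_num
        · rw [val_min h he, h0, h1]; norm_num
      · rw [val_terminal h, payOdd_of_eq hbe]

/-- Odd's optimal move function. -/
noncomputable def fOopt (k : ℕ) (φ : (Fin k → Bool) → (Fin k → Bool) → Prop) : MoveFn :=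
  fun bo be ms =>
    if val k φ bo be (ms ++ [false]) ≤ val k φ bo be (ms ++ [true]) then true else false

/-- Even's optimal move function. -/
noncomputable def fEopt (k : ℕ) (φ : (Fin k → Bool) → (Fin k → Bool) → Prop) : MoveFn :=
  fun bo be ms =>
    if val k φ bo be (ms ++ [false]) ≤ val k φ bo be (ms ++ [true]) then false else true

lemma fOopt_spec {k : ℕ} {φ : (Fin k → Bool) → (Fin k → Bool) → Prop} {bo be : Bool}
    (ms : List Bool) :
    val k φ bo be (ms ++ [fOopt k φ bo be ms]) =
      max (val k φ bo be (ms ++ [false])) (val k φ bo be (ms ++ [true])) := by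
  unfold fOopt
  split <;> rename_i h
  · rw [max_eq_right h]
  · rw [max_eq_left (le_of_not_ge h)]

lemma fEopt_spec {k : ℕ} {φ : (Fin k → Bool) → (Fin k → Bool) → Prop} {bo be : Bool}
    (ms : List Bool) :
    val k φ bo be (ms ++ [fEopt k φ bo be ms]) =
      min (val k φ bo be (ms ++ [false])) (val k φ bo be (ms ++ [true])) := by
  unfold fEopt
  split <;> rename_i h
  · rw [min_eq_left h]
  · rw [min_eq_right (le_of_not_ge h)]

lemma stepPlay_of_ge {k : ℕ} {fO fE : MoveFn} {bo be : Bool} {ms : List Bool}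
    (h : ¬ ms.length < 2 * k) : stepPlay k fO fE bo be ms = ms := by
  unfold stepPlay; rw [if_neg h]

lemma stepPlay_length {k : ℕ} {fO fE : MoveFn} {bo be : Bool} {ms : List Bool}
    (h : ms.length < 2 * k) : (stepPlay k fO fE bo be ms).length = ms.length + 1 := by
  unfold stepPlay; rw [if_pos h]; split <;> simp

lemma playout_of_ge {k : ℕ} {fO fE : MoveFn} {bo be : Bool} {ms : List Bool}
    (h : ¬ ms.length < 2 * k) : ∀ n, playout k fO fE bo be n ms = ms := by
  intro n
  induction n with
  | zero => rfl
  | succ n ih => rw [playout, stepPlay_of_ge h, ih]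

lemma playout_stable {k : ℕ} {fO fE : MoveFn} {bo be : Bool} :
    ∀ (n : ℕ) (ms : List Bool), 2 * k ≤ ms.length + n →
      playout k fO fE bo be (n + 1) ms = playout k fO fE bo be n ms := by
  intro n
  induction n with
  | zero =>
      intro ms hms
      show playout k fO fE bo be 0 (stepPlay k fO fE bo be ms) = ms
      rw [stepPlay_of_ge (by omega)]
      rfl
  | succ n ih =>
      intro ms hms
      by_cases h : ms.length < 2 * k
      · have e1 : playout k fO fE bo be (n + 1 + 1) ms
            = playout k fO fE bo be (n + 1) (stepPlay k fO fE bo be ms) := rfl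
        have e2 : playout k fO fE bo be (n + 1) ms
            = playout k fO fE bo be n (stepPlay k fO fE bo be ms) := rfl
        rw [e1, e2]
        exact ih _ (by rw [stepPlay_length h]; omega)
      · rw [playout_of_ge h, playout_of_ge h]

lemma fullPlay_step {k : ℕ} {fO fE : MoveFn} {bo be : Bool} (ms : List Bool) :
    fullPlay k fO fE bo be ms = fullPlay k fO fE bo be (stepPlay k fO fE bo be ms) := by
  by_cases h : ms.length < 2 * k
  · obtain ⟨m, hm⟩ : ∃ m, 2 * k = m + 1 := ⟨2 * k - 1, by omega⟩
    unfold fullPlay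
    rw [hm, playout]
    exact (playout_stable m _ (by rw [stepPlay_length h]; omega)).symm
  · rw [stepPlay_of_ge h]

lemma fullPlay_of_ge {k : ℕ} {fO fE : MoveFn} {bo be : Bool} {ms : List Bool}
    (h : ¬ ms.length < 2 * k) : fullPlay k fO fE bo be ms = ms :=
  playout_of_ge h _

/-- The main minimax lemma: against the canonical opponent, no deviation
beats the backward-induction value. -/
lemma minimax {k : ℕ} {φ : (Fin k → Bool) → (Fin k → Bool) → Prop} {bo be : Bool} :
    ∀ (n : ℕ) (ms : List Bool), 2 * k - ms.length ≤ n →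
      (∀ fO' : MoveFn,
        payOdd k φ bo be (fullPlay k fO' (fEopt k φ) bo be ms) ≤ val k φ bo be ms) ∧
      (∀ fE' : MoveFn,
        val k φ bo be ms ≤ payOdd k φ bo be (fullPlay k (fOopt k φ) fE' bo be ms)) := by
  intro n
  induction n with
  | zero =>
      intro ms hms
      have h : ¬ ms.length < 2 * k := by omega
      rw [val_terminal h]
      constructor <;> intro f <;> rw [fullPlay_of_ge h]
  | succ n ih =>
      intro ms hms
      by_cases h : ms.length < 2 * k
      · constructor
        · intro fO'
          rw [fullPlay_step ms]
          by_cases he : ms.length % 2 = 0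
          · have hstep : stepPlay k fO' (fEopt k φ) bo be ms = ms ++ [fO' bo be ms] := by
              unfold stepPlay; rw [if_pos h, if_pos he]
            rw [hstep, val_max h he]
            refine le_trans ((ih (ms ++ [fO' bo be ms]) (by simp; omega)).1 fO') ?_
            cases fO' bo be ms
            · exact le_max_left _ _
            · exact le_max_right _ _
          · have hstep : stepPlay k fO' (fEopt k φ) bo be ms
                = ms ++ [fEopt k φ bo be ms] := by
              unfold stepPlay; rw [if_pos h, if_neg he]
            rw [hstep, val_min h he, ← fEopt_spec ms]
            exact (ih (ms ++ [fEopt k φ bo be ms]) (by simp; omega)).1 fO'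
        · intro fE'
          rw [fullPlay_step ms]
          by_cases he : ms.length % 2 = 0
          · have hstep : stepPlay k (fOopt k φ) fE' bo be ms
                = ms ++ [fOopt k φ bo be ms] := by
              unfold stepPlay; rw [if_pos h, if_pos he]
            rw [hstep, val_max h he, ← fOopt_spec ms]
            exact (ih (ms ++ [fOopt k φ bo be ms]) (by simp; omega)).2 fE'
          · have hstep : stepPlay k (fOopt k φ) fE' bo be ms
                = ms ++ [fE' bo be ms] := by
              unfold stepPlay; rw [if_pos h, if_neg he]
            rw [hstep, val_min h he]
            refine le_trans ?_ ((ih (ms ++ [fE' bo be ms]) (by simp; omega)).2 fE')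
            cases fE' bo be ms
            · exact min_le_left _ _
            · exact min_le_right _ _
      · rw [val_terminal h]
        constructor <;> intro f <;> rw [fullPlay_of_ge h]

lemma play_eq_val {k : ℕ} {φ : (Fin k → Bool) → (Fin k → Bool) → Prop} {bo be : Bool}
    (ms : List Bool) :
    payOdd k φ bo be (fullPlay k (fOopt k φ) (fEopt k φ) bo be ms) = val k φ bo be ms :=
  le_antisymm ((minimax _ ms le_rfl).1 _) ((minimax _ ms le_rfl).2 _)

/-- List-based alternating quantifier. -/
def altL : ℕ → (List Bool → Prop) → Prop
  | 0, P => P []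
  | n + 1, P => ∃ x : Bool, ∀ y : Bool, altL n (fun ms => P (x :: y :: ms))

lemma altL_congr : ∀ (n : ℕ) (P Q : List Bool → Prop), (∀ ms, P ms ↔ Q ms) →
    (altL n P ↔ altL n Q) := by
  intro n
  induction n with
  | zero => intro P Q h; exact h []
  | succ n ih =>
      intro P Q h
      unfold altL
      constructor
      · rintro ⟨x, hx⟩
        exact ⟨x, fun y => (ih _ _ fun ms => h (x :: y :: ms)).mp (hx y)⟩
      · rintro ⟨x, hx⟩
        exact ⟨x, fun y => (ih _ _ fun ms => h (x :: y :: ms)).mpr (hx y)⟩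

lemma xOf_cons (k : ℕ) (x y : Bool) (ms : List Bool) :
    xOf (k + 1) (x :: y :: ms) = Fin.cons x (xOf k ms) := by
  funext i
  refine Fin.cases ?_ (fun j => ?_) i
  · rfl
  · show (x :: y :: ms).getD (2 * (j + 1 : ℕ)) false = ms.getD (2 * (j : ℕ)) false
    have : 2 * (j + 1 : ℕ) = (2 * (j : ℕ) + 1) + 1 := by omega
    rw [this]
    rfl

lemma yOf_cons (k : ℕ) (x y : Bool) (ms : List Bool) :
    yOf (k + 1) (x :: y :: ms) = Fin.cons y (yOf k ms) := by
  funext i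
  refine Fin.cases ?_ (fun j => ?_) i
  · rfl
  · show (x :: y :: ms).getD (2 * (j + 1 : ℕ) + 1) false = ms.getD (2 * (j : ℕ) + 1) false
    have : 2 * (j + 1 : ℕ) + 1 = (2 * (j : ℕ) + 1 + 1) + 1 := by omega
    rw [this]
    rfl

lemma altQ_iff_altL : ∀ (k : ℕ) (φ : (Fin k → Bool) → (Fin k → Bool) → Prop),
    altQ k φ ↔ altL k (fun ms => φ (xOf k ms) (yOf k ms)) := by
  intro k
  induction k with
  | zero =>
      intro φ
      unfold altQ altL
      constructor
      · intro h
        convert h using 2 <;> funext i <;> exact i.elim0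
      · intro h
        convert h using 2 <;> funext i <;> exact i.elim0
  | succ k ih =>
      intro φ
      unfold altQ altL
      constructor
      · rintro ⟨x, hx⟩
        refine ⟨x, fun y => ?_⟩
        have := (ih _).mp (hx y)
        refine (altL_congr k _ _ fun ms => ?_).mp this
        simp only [xOf_cons, yOf_cons]
      · rintro ⟨x, hx⟩
        refine ⟨x, fun y => ?_⟩
        refine (ih _).mpr ?_
        refine (altL_congr k _ _ fun ms => ?_).mpr (hx y)
        simp only [xOf_cons, yOf_cons]

lemma max_eq_one_iff {a b : ℚ} (ha : a = 0 ∨ a = 1) (hb : b = 0 ∨ b = 1) :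
    max a b = 1 ↔ a = 1 ∨ b = 1 := by
  rcases ha with rfl | rfl <;> rcases hb with rfl | rfl <;> norm_num

lemma min_eq_one_iff {a b : ℚ} (ha : a = 0 ∨ a = 1) (hb : b = 0 ∨ b = 1) :
    min a b = 1 ↔ a = 1 ∧ b = 1 := by
  rcases ha with rfl | rfl <;> rcases hb with rfl | rfl <;> norm_num

lemma altL_iff_val {k : ℕ} {φ : (Fin k → Bool) → (Fin k → Bool) → Prop} {bo be : Bool}
    (hne : bo ≠ be) :
    ∀ (r : ℕ) (ms : List Bool), ms.length + 2 * r = 2 * k →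
      (altL r (fun rest => φ (xOf k (ms ++ rest)) (yOf k (ms ++ rest))) ↔
        val k φ bo be ms = 1) := by
  intro r
  induction r with
  | zero =>
      intro ms hms
      rw [val_terminal (by omega)]
      unfold altL payOdd
      simp only [List.append_nil]
      by_cases hφ : φ (xOf k ms) (yOf k ms)
      · rw [if_pos (Or.inl hφ)]
        simp [hφ]
      · rw [if_neg (by rintro (h | h); exact hφ h; exact hne h)]
        simp [hφ]
  | succ r ih =>
      intro ms hms
      have hlen : ms.length < 2 * k := by omega
      have he : ms.length % 2 = 0 := by omega
      have hlen1 : ∀ x : Bool, (ms ++ [x]).length < 2 * k := by intro x; simp; omega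
      have he1 : ∀ x : Bool, ¬ (ms ++ [x]).length % 2 = 0 := by intro x; simp; omega
      have key : ∀ x y : Bool, (ms ++ [x]) ++ [y] = ms ++ [x, y] := by
        intro x y; simp
      rw [val_max hlen he]
      have v01 : ∀ ms' : List Bool, val k φ bo be ms' = 0 ∨ val k φ bo be ms' = 1 :=
        fun ms' => val_zero_or_one (2 * k - ms'.length) ms' le_rfl
      rw [max_eq_one_iff (v01 _) (v01 _)]
      have hx : ∀ x : Bool, val k φ bo be (ms ++ [x]) = 1 ↔
          ∀ y : Bool, val k φ bo be (ms ++ [x, y]) = 1 := by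
        intro x
        rw [val_min (hlen1 x) (he1 x), min_eq_one_iff (v01 _) (v01 _), key, key]
        constructor
        · rintro ⟨h0, h1⟩ y; cases y; exact h0; exact h1
        · intro h; exact ⟨h false, h true⟩
      have hxy : ∀ x y : Bool,
          (altL r (fun rest => φ (xOf k (ms ++ (x :: y :: rest)))
            (yOf k (ms ++ (x :: y :: rest)))) ↔ val k φ bo be (ms ++ [x, y]) = 1) := by
        intro x y
        have := ih (ms ++ [x, y]) (by simp; omega)
        refine Iff.trans ?_ this
        refine altL_congr r _ _ fun rest => ?_
        rw [List.append_assoc]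
        rfl
      show (∃ x : Bool, ∀ y : Bool,
          altL r (fun rest => φ (xOf k (ms ++ (x :: y :: rest)))
            (yOf k (ms ++ (x :: y :: rest))))) ↔ _
      constructor
      · rintro ⟨x, hxx⟩
        have hvx : val k φ bo be (ms ++ [x]) = 1 :=
          (hx x).mpr fun y => (hxy x y).mp (hxx y)
        cases x
        · exact Or.inl hvx
        · exact Or.inr hvx
      · rintro (h | h)
        · exact ⟨false, fun y => (hxy false y).mpr ((hx false).mp h y)⟩
        · exact ⟨true, fun y => (hxy true y).mpr ((hx true).mp h y)⟩

lemma altQ_iff_val {k : ℕ} {φ : (Fin k → Bool) → (Fin k → Bool) → Prop} {bo be : Bool}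
    (hne : bo ≠ be) : altQ k φ ↔ val k φ bo be [] = 1 := by
  rw [altQ_iff_altL]
  have := altL_iff_val (φ := φ) hne k [] (by simp)
  refine Iff.trans ?_ this
  exact altL_congr k _ _ fun ms => by rw [List.nil_append]

/-- the extensive-form game `Γ_φ` admits a pure subgame-perfect
equilibrium iff the alternating quantified formula
`∃x₁ ∀y₁ ⋯ ∃x_k ∀y_k, φ x y` is true. -/
theorem stmt9 (k : ℕ) (φ : (Fin k → Bool) → (Fin k → Bool) → Prop) :
    (∃ (boS beS : Bool) (fO fE : MoveFn), IsSPNE k φ boS beS fO fE) ↔ altQ k φ := by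
  constructor
  · rintro ⟨boS, beS, fO, fE, hS⟩
    by_contra hQ
    -- on path, Odd's payoff must be 1 (she can deviate to match beS)
    have hE1 : payOdd k φ boS beS (fullPlay k fO fE boS beS []) = 1 := by
      refine le_antisymm payOdd_le_one ?_
      have := hS.root_odd beS fO
      rwa [payOdd_of_eq rfl] at this
    -- Even deviates to mismatch and plays optimally, getting 1 > 0
    have hne : boS ≠ (!boS) := by cases boS <;> simp
    have hval0 : val k φ boS (!boS) [] = 0 := by
      rcases val_zero_or_one (k := k) (φ := φ) (bo := boS) (be := !boS)
          (2 * k) [] (by simp) with h | h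
      · exact h
      · exact absurd ((altQ_iff_val hne).mpr h) hQ
    have hdev := hS.root_even (!boS) (fEopt k φ)
    have hle : payOdd k φ boS (!boS) (fullPlay k fO (fEopt k φ) boS (!boS) []) ≤ 0 := by
      have := (minimax (bo := boS) (be := !boS) (φ := φ) (2 * k) [] (by simp)).1 fO
      rwa [hval0] at this
    unfold payEven at hdev
    rw [hE1] at hdev
    have := payOdd_nonneg (k := k) (φ := φ) (bo := boS) (be := !boS)
      (ms := fullPlay k fO (fEopt k φ) boS (!boS) [])
    linarith
  · intro hQ
    refine ⟨true, true, fOopt k φ, fEopt k φ, ?_⟩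
    have hval1 : ∀ bo be : Bool, val k φ bo be [] = 1 := by
      intro bo be
      by_cases h : bo = be
      · exact val_of_eq h (2 * k) [] (by simp)
      · exact (altQ_iff_val h).mp hQ
    constructor
    · intro bo' fO'
      rw [play_eq_val, val_of_eq rfl (2 * k) [] (by simp)]
      exact payOdd_le_one
    · intro be' fE'
      unfold payEven
      rw [play_eq_val, val_of_eq rfl (2 * k) [] (by simp)]
      have := (minimax (bo := true) (be := be') (φ := φ) (2 * k) [] (by simp)).2 fE'
      rw [hval1 true be'] at this
      linarith
    · intro bo be ms hms fO'
      rw [play_eq_val]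
      exact (minimax (k := k) (φ := φ) (bo := bo) (be := be) (2 * k) ms (by omega)).1 fO'
    · intro bo be ms hms fE'
      unfold payEven
      rw [play_eq_val]
      have := (minimax (k := k) (φ := φ) (bo := bo) (be := be) (2 * k) ms (by omega)).2 fE'
      linarith
end
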